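/- Let G be a finitely generated group. Then the Morse boundary of G is either empty or has at least 2 points. -/

import Mathlib

open Set

/-- A Morse gauge. -/
abbrev MorseGauge := ℝ → ℝ → ℝ

/-- The constant `δ_M` associated to a Morse gauge `M`. -/
noncomputable def deltaM (M : MorseGauge) : ℝ :=
  max (4 * M 1 (2 * M 5 0) + 2 * M 5 0) (8 * M 3 0)

/-- A list of letters from `S ∪ S⁻¹`. -/
def IsWordOver {G : Type*} [Group G] (S : Set G) (l : List G) : Prop :=
  ∀ x ∈ l, x ∈ S ∨ x⁻¹ ∈ S

/-- The word metric on `G` associated to the generating set `S`. -/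
noncomputable def wordDist {G : Type*} [Group G] (S : Set G) (x y : G) : ℝ :=
  sInf {r : ℝ | ∃ l : List G, IsWordOver S l ∧ l.prod = x⁻¹ * y ∧ r = l.length}

section NatPaths

variable {G : Type*}

/-- A discrete `(L,e)`-quasi-geodesic (with respect to the distance function `d`),
parametrised over a set of naturals. -/
def IsQGOnN (d : G → G → ℝ) (L e : ℝ) (γ : ℕ → G) (s : Set ℕ) : Prop :=
  ∀ i ∈ s, ∀ j ∈ s,
    (1 / L) * |(i : ℝ) - (j : ℝ)| - e ≤ d (γ i) (γ j) ∧
      d (γ i) (γ j) ≤ L * |(i : ℝ) - (j : ℝ)| + e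

/-- A discrete geodesic with respect to `d`. -/
def IsGeodesicOnN (d : G → G → ℝ) (γ : ℕ → G) (s : Set ℕ) : Prop :=
  ∀ i ∈ s, ∀ j ∈ s, d (γ i) (γ j) = |(i : ℝ) - (j : ℝ)|

/-- The (discrete) path `γ` on `s` is `M`-Morse with respect to `d`. -/
def IsMorseOnN (d : G → G → ℝ) (M : MorseGauge) (γ : ℕ → G) (s : Set ℕ) : Prop :=
  ∀ L e, 1 ≤ L → 0 ≤ e → ∀ (η : ℕ → G) (a b : ℕ), a ≤ b →
    IsQGOnN d L e η (Icc a b) → η a ∈ γ '' s → η b ∈ γ '' s →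
    ∀ i ∈ Icc a b, ∃ j ∈ s, d (η i) (γ j) ≤ M L e

/-- A Morse geodesic ray from the basepoint `o`. -/
def IsMorseRayN (d : G → G → ℝ) (o : G) (γ : ℕ → G) : Prop :=
  γ 0 = o ∧ IsGeodesicOnN d γ univ ∧ ∃ M, IsMorseOnN d M γ univ

/-- The type of Morse geodesic rays from `o`. -/
def MRayN (d : G → G → ℝ) (o : G) := {γ : ℕ → G // IsMorseRayN d o γ}

/-- The Morse boundary: Morse rays from `o` up to bounded (Hausdorff) distance. -/
def MorseBoundaryN (d : G → G → ℝ) (o : G) :=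
  Quot (fun γ γ' : MRayN d o => ∃ C, ∀ i, d (γ.1 i) (γ'.1 i) ≤ C)

/-- `z` is an `M`-Morse direction: it admits an `M`-Morse realization. -/
def MorseDirN (d : G → G → ℝ) (o : G) (M : MorseGauge) (z : MorseBoundaryN d o) : Prop :=
  ∃ γ : MRayN d o, IsMorseOnN d M γ.1 univ ∧ Quot.mk _ γ = z

/-- The `M`-Morse stratum `∂^M` of the Morse boundary. -/
def stratumN (d : G → G → ℝ) (o : G) (M : MorseGauge) : Set (MorseBoundaryN d o) :=
  {z | MorseDirN d o M z}

/-- The neighbourhood `U_{M,n}(z)` in the `M`-Morse stratum: classes of `M`-Morse rays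
that `δ_M`-fellow-travel every `M`-Morse realization of `z` up to time `n`. -/
def UN (d : G → G → ℝ) (o : G) (M : MorseGauge) (n : ℕ) (z : MorseBoundaryN d o) :
    Set (MorseBoundaryN d o) :=
  {w | ∃ η : MRayN d o, Quot.mk _ η = w ∧ IsMorseOnN d M η.1 univ ∧
        ∀ ξ : MRayN d o, IsMorseOnN d M ξ.1 univ → Quot.mk _ ξ = z →
          ∀ t ≤ n, d (η.1 t) (ξ.1 t) < deltaM M}

/-- The direct-limit topology on the Morse boundary: a set is open iff its intersection
with every stratum is open for the neighbourhood-basis topology of that stratum. -/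
def morseTopologyN (d : G → G → ℝ) (o : G) : TopologicalSpace (MorseBoundaryN d o) where
  IsOpen O := ∀ M z, z ∈ O → MorseDirN d o M z → ∃ n, UN d o M n z ∩ stratumN d o M ⊆ O
  isOpen_univ := by intro M z _ _; exact ⟨0, fun w _ => trivial⟩
  isOpen_inter := by
    intro O₁ O₂ h₁ h₂ M z hz hM
    obtain ⟨n₁, hn₁⟩ := h₁ M z hz.1 hM
    obtain ⟨n₂, hn₂⟩ := h₂ M z hz.2 hM
    refine ⟨max n₁ n₂, fun w hw => ⟨hn₁ ⟨?_, hw.2⟩, hn₂ ⟨?_, hw.2⟩⟩⟩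
    · obtain ⟨η, h1, h2, h3⟩ := hw.1
      exact ⟨η, h1, h2, fun ξ a b t ht => h3 ξ a b t (ht.trans (le_max_left _ _))⟩
    · obtain ⟨η, h1, h2, h3⟩ := hw.1
      exact ⟨η, h1, h2, fun ξ a b t ht => h3 ξ a b t (ht.trans (le_max_right _ _))⟩
  isOpen_sUnion := by
    intro S hS M z hz hM
    obtain ⟨O, hO, hzO⟩ := hz
    obtain ⟨n, hn⟩ := hS O hO M z hzO hM
    exact ⟨n, fun w hw => ⟨O, hO, hn hw⟩⟩

/-- `x ∈ G` is an `M`-Morse point: some geodesic from `o` to `x` is `M`-Morse. -/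
def MorsePtN (d : G → G → ℝ) (o : G) (M : MorseGauge) (x : G) : Prop :=
  ∃ (n : ℕ) (γ : ℕ → G), γ 0 = o ∧ γ n = x ∧
    IsGeodesicOnN d γ (Iic n) ∧ IsMorseOnN d M γ (Iic n)

/-- Membership of the point `x` in the filled neighbourhood `Û_{M,k}(z)`. -/
def InFilledPtN (d : G → G → ℝ) (o : G) (M : MorseGauge) (k : ℕ)
    (z : MorseBoundaryN d o) (x : G) : Prop :=
  ∃ (n : ℕ) (γ : ℕ → G), k ≤ n ∧ γ 0 = o ∧ γ n = x ∧
    IsGeodesicOnN d γ (Iic n) ∧ IsMorseOnN d M γ (Iic n) ∧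
    ∀ ξ : MRayN d o, IsMorseOnN d M ξ.1 univ → Quot.mk _ ξ = z →
      ∀ t ≤ k, d (γ t) (ξ.1 t) < deltaM M

end NatPaths


-- ===== auxiliary development =====

section WordLen
variable {G : Type*} [Group G] {S : Set G}

/-- Natural-number word lengths of `g`. -/
def WSet (S : Set G) (g : G) : Set ℕ :=
  {k | ∃ l : List G, IsWordOver S l ∧ l.prod = g ∧ l.length = k}

lemma wset_one : 0 ∈ WSet S (1 : G) := ⟨[], fun x hx => absurd hx List.not_mem_nil, rfl, rfl⟩

lemma wset_mul {k₁ k₂ : ℕ} {g₁ g₂ : G} (h₁ : k₁ ∈ WSet S g₁) (h₂ : k₂ ∈ WSet S g₂) :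
    k₁ + k₂ ∈ WSet S (g₁ * g₂) := by
  obtain ⟨l₁, hw₁, hp₁, hl₁⟩ := h₁
  obtain ⟨l₂, hw₂, hp₂, hl₂⟩ := h₂
  exact ⟨l₁ ++ l₂, fun x hx => by rcases List.mem_append.1 hx with h | h; exacts [hw₁ x h, hw₂ x h],
    by simp [hp₁, hp₂], by simp [hl₁, hl₂]⟩

lemma wset_inv {k : ℕ} {g : G} (h : k ∈ WSet S g) : k ∈ WSet S g⁻¹ := by
  obtain ⟨l, hw, hp, hl⟩ := h
  refine ⟨(l.map (·⁻¹)).reverse, ?_, ?_, by simp [hl]⟩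
  · intro x hx
    simp only [List.mem_reverse, List.mem_map] at hx
    obtain ⟨y, hy, rfl⟩ := hx
    rcases hw y hy with h | h
    · exact Or.inr (by simpa using h)
    · exact Or.inl h
  · rw [List.prod_reverse_noncomm, List.map_map]
    simp [hp]

lemma wset_gen {g : G} (hg : g ∈ S) : 1 ∈ WSet S g :=
  ⟨[g], fun x hx => by simp at hx; subst hx; exact Or.inl hg, by simp, rfl⟩

lemma wset_nonempty (hgen : Subgroup.closure S = ⊤) (g : G) : (WSet S g).Nonempty := by
  have hg : g ∈ Subgroup.closure S := hgen ▸ Subgroup.mem_top g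
  induction hg using Subgroup.closure_induction with
  | mem x hx => exact ⟨1, wset_gen hx⟩
  | one => exact ⟨0, wset_one⟩
  | mul x y _ _ hx hy =>
      obtain ⟨k₁, h₁⟩ := hx; obtain ⟨k₂, h₂⟩ := hy
      exact ⟨k₁ + k₂, wset_mul h₁ h₂⟩
  | inv x _ hx => obtain ⟨k, h⟩ := hx; exact ⟨k, wset_inv h⟩

/-- The word length as a natural number. -/
noncomputable def wlen (S : Set G) (g : G) : ℕ := sInf (WSet S g)

lemma wordDist_eq (hgen : Subgroup.closure S = ⊤) (x y : G) :
    wordDist S x y = (wlen S (x⁻¹ * y) : ℝ) := by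
  have hne := wset_nonempty hgen (x⁻¹ * y)
  have hmem := Nat.sInf_mem hne
  obtain ⟨l, hw, hp, hl⟩ := hmem
  have h1 : ((wlen S (x⁻¹ * y) : ℕ) : ℝ) ∈
      {r : ℝ | ∃ l : List G, IsWordOver S l ∧ l.prod = x⁻¹ * y ∧ r = l.length} :=
    ⟨l, hw, hp, by exact_mod_cast hl.symm⟩
  refine le_antisymm ?_ ?_
  · refine csInf_le ⟨0, fun r hr => ?_⟩ h1
    obtain ⟨l', _, _, rfl⟩ := hr; positivity
  · refine le_csInf (Set.nonempty_of_mem h1) fun r hr => ?_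
    obtain ⟨l', hw', hp', rfl⟩ := hr
    have hm : l'.length ∈ WSet S (x⁻¹ * y) := ⟨l', hw', hp', rfl⟩
    exact_mod_cast Nat.sInf_le hm

lemma wlen_le_of_mem {k : ℕ} {g : G} (h : k ∈ WSet S g) : wlen S g ≤ k := Nat.sInf_le h

lemma wlen_one : wlen S (1 : G) = 0 := Nat.le_zero.1 (wlen_le_of_mem wset_one)

lemma wlen_inv (g : G) : wlen S g⁻¹ = wlen S g := by
  have key : ∀ h : G, (WSet S h).Nonempty → wlen S h⁻¹ ≤ wlen S h :=
    fun h hh => wlen_le_of_mem (wset_inv (Nat.sInf_mem hh))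
  by_cases h : (WSet S g).Nonempty
  · refine le_antisymm (key g h) ?_
    have h' : (WSet S g⁻¹).Nonempty := h.imp fun k hk => wset_inv hk
    have := key g⁻¹ h'
    rwa [inv_inv] at this
  · have h' : ¬(WSet S g⁻¹).Nonempty := fun hh =>
      h (hh.imp fun k hk => by simpa using wset_inv hk)
    unfold wlen
    rw [Set.not_nonempty_iff_eq_empty.1 h, Set.not_nonempty_iff_eq_empty.1 h']

lemma wlen_mul_le (hgen : Subgroup.closure S = ⊤) (g h : G) :
    wlen S (g * h) ≤ wlen S g + wlen S h :=
  wlen_le_of_mem (wset_mul (Nat.sInf_mem (wset_nonempty hgen g))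
    (Nat.sInf_mem (wset_nonempty hgen h)))

end WordLen

section MetricProps
variable {G : Type*} [Group G] {S : Set G}

lemma wd_nonneg (hgen : Subgroup.closure S = ⊤) (x y : G) : 0 ≤ wordDist S x y := by
  rw [wordDist_eq hgen]; positivity

lemma wd_self (hgen : Subgroup.closure S = ⊤) (x : G) : wordDist S x x = 0 := by
  rw [wordDist_eq hgen]; simp [wlen_one]

lemma wd_symm (hgen : Subgroup.closure S = ⊤) (x y : G) :
    wordDist S x y = wordDist S y x := by
  rw [wordDist_eq hgen, wordDist_eq hgen]
  congr 1
  rw [← wlen_inv]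
  simp [mul_comm]

lemma wd_triangle (hgen : Subgroup.closure S = ⊤) (x y z : G) :
    wordDist S x z ≤ wordDist S x y + wordDist S y z := by
  rw [wordDist_eq hgen, wordDist_eq hgen, wordDist_eq hgen]
  have : x⁻¹ * z = (x⁻¹ * y) * (y⁻¹ * z) := by group
  rw [this]
  exact_mod_cast wlen_mul_le hgen _ _

lemma wd_left (x y g : G) : wordDist S (g * x) (g * y) = wordDist S x y := by
  unfold wordDist
  congr 1
  ext r
  simp [mul_assoc]

lemma wd_one (hgen : Subgroup.closure S = ⊤) (x : G) :
    wordDist S 1 x = (wlen S x : ℝ) := by rw [wordDist_eq hgen]; simp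

lemma finite_ball (hfin : S.Finite) (hgen : Subgroup.closure S = ⊤) (R : ℕ) :
    {x : G | wlen S x ≤ R}.Finite := by
  set T : Set G := {x | x ∈ S ∨ x⁻¹ ∈ S} with hT
  have hTfin : T.Finite := by
    have h2 : {x : G | x⁻¹ ∈ S}.Finite := by
      have : {x : G | x⁻¹ ∈ S} = (·⁻¹) '' S := by
        ext x; simp only [Set.mem_image, Set.mem_setOf_eq]
        constructor
        · intro h; exact ⟨x⁻¹, h, inv_inv x⟩
        · rintro ⟨y, hy, rfl⟩; simpa using hy
      rw [this]; exact hfin.image _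
    exact (hfin.union h2)
  have : Finite T := hTfin
  have hlists : {l : List G | IsWordOver S l ∧ l.length ≤ R}.Finite := by
    have hsub : {l : List G | IsWordOver S l ∧ l.length ≤ R} ⊆
        (List.map (Subtype.val : T → G)) '' {l : List T | l.length ≤ R} := by
      rintro l ⟨hw, hlen⟩
      refine ⟨l.attach.map (fun x => ⟨x.1, hw x.1 x.2⟩), by simpa using hlen, ?_⟩
      simp [List.map_map]
    exact ((List.finite_length_le T R).image _).subset hsub
  have hsub2 : {x : G | wlen S x ≤ R} ⊆
      List.prod '' {l : List G | IsWordOver S l ∧ l.length ≤ R} := by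
    intro x hx
    obtain ⟨l, hw, hp, hl⟩ := Nat.sInf_mem (wset_nonempty hgen x)
    exact ⟨l, ⟨hw, by rw [hl]; exact hx⟩, hp⟩
  exact (hlists.image _).subset hsub2

end MetricProps

section Abstract
open Set
variable {G : Type*} [Group G]

/-- Abstract properties of a left-invariant pseudometric on a group. -/
structure DMet (d : G → G → ℝ) : Prop where
  nonneg : ∀ x y, 0 ≤ d x y
  refl : ∀ x, d x x = 0
  symm : ∀ x y, d x y = d y x
  triangle : ∀ x y z, d x z ≤ d x y + d y z
  left : ∀ g x y, d (g * x) (g * y) = d x y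

variable {d : G → G → ℝ}

lemma mGauge_nonneg (hd : DMet d) {M : MorseGauge} {γ : ℕ → G} {s : Set ℕ}
    (hM : IsMorseOnN d M γ s) {k : ℕ} (hk : k ∈ s) {L e : ℝ} (hL : 1 ≤ L) (he : 0 ≤ e) :
    0 ≤ M L e := by
  have hq : IsQGOnN d L e (fun _ => γ k) (Icc k k) := by
    intro i hi j hj
    simp only [mem_Icc] at hi hj
    have hij : i = j := by omega
    subst hij
    rw [hd.refl]
    constructor
    · simp only [sub_self, abs_zero, mul_zero, zero_sub]
      linarith
    · simp only [sub_self, abs_zero, mul_zero, zero_add]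
      exact he
  obtain ⟨j, _, hj⟩ := hM L e hL he (fun _ => γ k) k k le_rfl hq
    ⟨k, hk, rfl⟩ ⟨k, hk, rfl⟩ k (by simp)
  exact le_trans (hd.nonneg _ _) hj

lemma qg_translate (hd : DMet d) {L e : ℝ} {q : ℕ → G} {s : Set ℕ} (g : G)
    (hq : IsQGOnN d L e q s) : IsQGOnN d L e (fun i => g * q i) s := by
  intro i hi j hj
  simpa [hd.left] using hq i hi j hj

/-- The reversed, translated segment `i ↦ (γ n)⁻¹ * γ (n - i)`. -/
def rseg (γ : ℕ → G) (n : ℕ) : ℕ → G := fun i => (γ n)⁻¹ * γ (n - i)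

lemma rseg_zero (γ : ℕ → G) (n : ℕ) : rseg γ n 0 = 1 := by simp [rseg]

lemma rseg_geodesic (hd : DMet d) {γ : ℕ → G} (hgeo : IsGeodesicOnN d γ univ) (n : ℕ) :
    IsGeodesicOnN d (rseg γ n) (Iic n) := by
  intro i hi j hj
  simp only [mem_Iic] at hi hj
  rw [rseg, rseg, hd.left, hgeo _ (mem_univ _) _ (mem_univ _)]
  rw [Nat.cast_sub hi, Nat.cast_sub hj,
    show ((n:ℝ) - i) - ((n:ℝ) - j) = (j:ℝ) - i by ring, abs_sub_comm]

lemma rseg_morse (hd : DMet d) {γ : ℕ → G} {M : MorseGauge} (n : ℕ)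
    (hM : IsMorseOnN d M γ (Iic n)) : IsMorseOnN d M (rseg γ n) (Iic n) := by
  intro L e hL he q a b hab hq ha hb i hi
  have htr : IsQGOnN d L e (fun i => γ n * q i) (Icc a b) := qg_translate hd _ hq
  have hmem : ∀ x : ℕ, x ∈ Icc a b → q x ∈ rseg γ n '' Iic n →
      (γ n * q x) ∈ γ '' Iic n := by
    rintro x hx ⟨k, hk, hkq⟩
    refine ⟨n - k, by simp [mem_Iic], ?_⟩
    rw [← hkq, rseg]
    simp
  obtain ⟨j, hj, hjd⟩ := hM L e hL he (fun i => γ n * q i) a b hab htr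
    (hmem a (by simp [hab]) ha) (hmem b (by simp [hab]) hb) i hi
  simp only [mem_Iic] at hj
  refine ⟨n - j, by simp [mem_Iic], ?_⟩
  have : γ j = γ n * rseg γ n (n - j) := by
    rw [rseg]
    simp [Nat.sub_sub_self hj]
  calc d (q i) (rseg γ n (n - j)) = d (γ n * q i) (γ n * rseg γ n (n - j)) := (hd.left _ _ _).symm
  _ = d (γ n * q i) (γ j) := by rw [← this]
  _ ≤ M L e := hjd

end Abstract

section Restrict
open Set
variable {G : Type*} [Group G] {d : G → G → ℝ}

/-- Gauge for restrictions of `M`-Morse geodesics. -/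
noncomputable def M1 (M : MorseGauge) : MorseGauge :=
  fun L e => L^2*(4*(M L e) + L + 2*e) + e + 2*(M L e)

lemma morse_restrict (hd : DMet d) {γ : ℕ → G} {M : MorseGauge}
    (hgeo : IsGeodesicOnN d γ univ) (hM : IsMorseOnN d M γ univ) (n : ℕ) :
    IsMorseOnN d (M1 M) γ (Iic n) := by
  classical
  intro L e hL he q a b hab hq ha hb i hi
  have hL0 : (0:ℝ) < L := lt_of_lt_of_le one_pos hL
  obtain ⟨s, hs, hsa⟩ := ha
  obtain ⟨t, ht, hta⟩ := hb
  simp only [mem_Iic] at hs ht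
  set Ms := M L e with hMsdef
  have hMs0 : 0 ≤ Ms := mGauge_nonneg hd hM (mem_univ 0) hL he
  -- bound comparisons
  have hL2 : (1:ℝ) ≤ L^2 := by nlinarith
  have hbig : 2*Ms ≤ M1 M L e := by
    have hpos : (0:ℝ) ≤ 4*Ms + L + 2*e := by linarith
    have := mul_le_mul_of_nonneg_right hL2 hpos
    simp only [M1, ← hMsdef]
    nlinarith
  -- shadows
  have hsh : ∀ i' ∈ Icc a b, ∃ j : ℕ, d (q i') (γ j) ≤ Ms := by
    intro i' hi'
    obtain ⟨j, _, hj⟩ := hM L e hL he q a b hab hq ⟨s, mem_univ s, hsa⟩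
      ⟨t, mem_univ t, hta⟩ i' hi'
    exact ⟨j, hj⟩
  choose! J hJ using hsh
  -- index-distance comparison
  have hidx : ∀ (i' j : ℕ), i' ∈ Icc a b → |(J i' : ℝ) - (j : ℝ)| ≤ d (q i') (γ j) + Ms := by
    intro i' j hi'
    calc |(J i' : ℝ) - (j : ℝ)| = d (γ (J i')) (γ j) :=
          (hgeo _ (mem_univ _) _ (mem_univ _)).symm
    _ ≤ d (γ (J i')) (q i') + d (q i') (γ j) := hd.triangle _ _ _
    _ = d (q i') (γ (J i')) + d (q i') (γ j) := by rw [hd.symm]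
    _ ≤ Ms + d (q i') (γ j) := by linarith [hJ i' hi']
    _ = d (q i') (γ j) + Ms := by ring
  -- consecutive shadows move slowly
  have hstep : ∀ i' : ℕ, a ≤ i' → i' + 1 ≤ b →
      |(J (i'+1) : ℝ) - (J i' : ℝ)| ≤ 2*Ms + (L + e) := by
    intro i' h1 h2
    have hm1 : i' ∈ Icc a b := ⟨h1, by omega⟩
    have hm2 : i' + 1 ∈ Icc a b := ⟨by omega, h2⟩
    have hqd : d (q i') (q (i'+1)) ≤ L + e := by
      have h := (hq i' hm1 (i'+1) hm2).2
      have hc : ((i' : ℝ)) - ((i'+1 : ℕ) : ℝ) = -1 := by push_cast; ring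
      rw [hc, abs_neg, abs_one, mul_one] at h
      exact h
    calc |(J (i'+1) : ℝ) - (J i' : ℝ)| = d (γ (J (i'+1))) (γ (J i')) :=
          (hgeo _ (mem_univ _) _ (mem_univ _)).symm
    _ ≤ d (γ (J (i'+1))) (q (i'+1)) + d (q (i'+1)) (γ (J i')) := hd.triangle _ _ _
    _ ≤ d (γ (J (i'+1))) (q (i'+1)) + (d (q (i'+1)) (q i') + d (q i') (γ (J i'))) := by
          linarith [hd.triangle (q (i'+1)) (q i') (γ (J i'))]
    _ ≤ Ms + ((L + e) + Ms) := by
          have e1 := hJ (i'+1) hm2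
          have e2 := hJ i' hm1
          rw [hd.symm (γ (J (i'+1))) (q (i'+1))]
          rw [hd.symm (q (i'+1)) (q i')]
          linarith
    _ = 2*Ms + (L + e) := by ring
  -- boundary shadows are low
  have hPa : (J a : ℝ) ≤ (n : ℝ) + Ms := by
    have h0 : d (q a) (γ s) = 0 := by rw [← hsa, hd.refl]
    have := hidx a s ⟨le_rfl, hab⟩
    rw [h0] at this
    have habs := abs_le.1 this
    have : (J a : ℝ) ≤ (s : ℝ) + Ms := by linarith [habs.2]
    have hsn : (s : ℝ) ≤ (n : ℝ) := by exact_mod_cast hs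
    linarith
  have hPb : (J b : ℝ) ≤ (n : ℝ) + Ms := by
    have h0 : d (q b) (γ t) = 0 := by rw [← hta, hd.refl]
    have := hidx b t ⟨hab, le_rfl⟩
    rw [h0] at this
    have habs := abs_le.1 this
    have : (J b : ℝ) ≤ (t : ℝ) + Ms := by linarith [habs.2]
    have htn : (t : ℝ) ≤ (n : ℝ) := by exact_mod_cast ht
    linarith
  -- main case analysis
  by_cases h0 : J i ≤ n
  · exact ⟨J i, mem_Iic.2 h0, le_trans (hJ i hi) (by linarith)⟩
  by_cases h1 : (J i : ℝ) ≤ (n : ℝ) + Ms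
  · refine ⟨n, mem_Iic.2 le_rfl, ?_⟩
    have hdist : d (γ (J i)) (γ n) = |(J i : ℝ) - (n : ℝ)| := hgeo _ (mem_univ _) _ (mem_univ _)
    have hJn : |(J i : ℝ) - (n : ℝ)| ≤ Ms := by
      rw [abs_le]
      constructor
      · push_neg at h0
        have hn : (n : ℝ) < (J i : ℝ) := by exact_mod_cast h0
        linarith
      · linarith
    calc d (q i) (γ n) ≤ d (q i) (γ (J i)) + d (γ (J i)) (γ n) := hd.triangle _ _ _
    _ ≤ Ms + Ms := by rw [hdist]; linarith [hJ i hi]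
    _ ≤ M1 M L e := by linarith
  -- the excursion case
  push_neg at h1
  set T : ℝ := (n : ℝ) + Ms with hT
  set P : ℕ → Prop := fun m => a ≤ m ∧ (J m : ℝ) ≤ T with hP
  have hPa' : P a := ⟨le_rfl, hPa⟩
  have hai : a ≤ i := hi.1
  have hib : i ≤ b := hi.2
  set i₁ := Nat.findGreatest P i with hi₁def
  have hi₁P : P i₁ := Nat.findGreatest_spec hai hPa'
  have hi₁le : i₁ ≤ i := Nat.findGreatest_le i
  have hi₁lt : i₁ < i := by
    rcases lt_or_eq_of_le hi₁le with h | h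
    · exact h
    · exact absurd (h ▸ hi₁P).2 (not_le.2 h1)
  have hnot1 : ¬ P (i₁ + 1) := Nat.findGreatest_is_greatest (Nat.lt_succ_self i₁) (by omega)
  have hJ1 : T < (J (i₁ + 1) : ℝ) := by
    by_contra hcon
    exact hnot1 ⟨by omega, not_lt.1 hcon⟩
  -- find i₂ ≥ i with low shadow
  set Q : ℕ → Prop := fun u => (J (i + u) : ℝ) ≤ T ∧ i + u ≤ b with hQ
  have hQex : ∃ u, Q u := ⟨b - i, by constructor; · rw [Nat.add_sub_cancel' hib]; exact hPb
                                     · omega⟩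
  set u₀ := Nat.find hQex with hu₀def
  have hQu : Q u₀ := Nat.find_spec hQex
  set i₂ := i + u₀ with hi₂def
  have hi₂b : i₂ ≤ b := hQu.2
  have hu₀pos : 0 < u₀ := by
    rcases Nat.eq_zero_or_pos u₀ with h | h
    · exfalso; have := hQu.1; rw [h] at this; simp at this; exact absurd this (not_le.2 h1)
    · exact h
  have hnot2 : ¬ Q (u₀ - 1) := Nat.find_min hQex (by omega)
  have hJ2' : T < (J (i + (u₀ - 1)) : ℝ) := by
    by_contra hcon
    exact hnot2 ⟨not_lt.1 hcon, by omega⟩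
  -- both transition shadows lie in (T - K, T]
  set K : ℝ := 2*Ms + (L + e) with hK
  have hK0 : 0 ≤ K := by simp only [hK]; linarith
  have hstep1 : |(J (i₁+1) : ℝ) - (J i₁ : ℝ)| ≤ K := hstep i₁ hi₁P.1 (by omega)
  have hJi₁lo : T - K < (J i₁ : ℝ) := by
    have := (abs_le.1 hstep1).2
    linarith
  have hstep2 : |(J ((i + (u₀-1)) + 1) : ℝ) - (J (i + (u₀-1)) : ℝ)| ≤ K := by
    refine hstep _ (by omega) (by omega)
  have hi₂eq : (i + (u₀ - 1)) + 1 = i₂ := by omega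
  have hJi₂lo : T - K < (J i₂ : ℝ) := by
    rw [hi₂eq] at hstep2
    have := (abs_le.1 hstep2).1
    linarith
  have hJi₂hi : (J i₂ : ℝ) ≤ T := by have := hQu.1; rwa [← hi₂def] at this
  have hJi₁hi : (J i₁ : ℝ) ≤ T := hi₁P.2
  -- distance between the two transition points
  have hm₁ : i₁ ∈ Icc a b := ⟨hi₁P.1, le_trans hi₁le hib⟩
  have hm₂ : i₂ ∈ Icc a b := ⟨by omega, hi₂b⟩
  have hq12 : d (q i₁) (q i₂) ≤ 2*Ms + K := by
    have hJd : |(J i₁ : ℝ) - (J i₂ : ℝ)| ≤ K := by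
      rw [abs_le]; constructor <;> linarith
    have hgd : d (γ (J i₁)) (γ (J i₂)) = |(J i₁ : ℝ) - (J i₂ : ℝ)| :=
      hgeo _ (mem_univ _) _ (mem_univ _)
    calc d (q i₁) (q i₂) ≤ d (q i₁) (γ (J i₁)) + d (γ (J i₁)) (q i₂) := hd.triangle _ _ _
    _ ≤ d (q i₁) (γ (J i₁)) + (d (γ (J i₁)) (γ (J i₂)) + d (γ (J i₂)) (q i₂)) := by
        linarith [hd.triangle (γ (J i₁)) (γ (J i₂)) (q i₂)]
    _ ≤ Ms + (K + Ms) := by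
        rw [hgd, hd.symm (γ (J i₂)) (q i₂)]
        linarith [hJ i₁ hm₁, hJ i₂ hm₂, hJd]
    _ = 2*Ms + K := by ring
  -- the excursion is short
  have hlen : ((i₂ : ℝ) - (i₁ : ℝ)) ≤ L * (2*Ms + K + e) := by
    have hlow := (hq i₁ hm₁ i₂ hm₂).1
    have habs : |(i₁ : ℝ) - (i₂ : ℝ)| = (i₂ : ℝ) - (i₁ : ℝ) := by
      rw [abs_sub_comm, abs_of_nonneg]
      have : (i₁ : ℝ) ≤ (i₂ : ℝ) := by exact_mod_cast le_trans hi₁le (by omega)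
      linarith
    rw [habs] at hlow
    have h2 : (1/L) * ((i₂:ℝ) - (i₁:ℝ)) ≤ 2*Ms + K + e := by linarith
    calc ((i₂:ℝ) - (i₁:ℝ)) = L * ((1/L) * ((i₂:ℝ) - (i₁:ℝ))) := by field_simp
    _ ≤ L * (2*Ms + K + e) := by
        apply mul_le_mul_of_nonneg_left h2 (le_of_lt hL0)
  -- distance from q i to q i₁
  have hqi : d (q i) (q i₁) ≤ L * (L * (2*Ms + K + e)) + e := by
    have h := (hq i hi i₁ hm₁).2
    have habs : |(i:ℝ) - (i₁:ℝ)| = (i:ℝ) - (i₁:ℝ) := by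
      rw [abs_of_nonneg]
      have : (i₁ : ℝ) ≤ (i : ℝ) := by exact_mod_cast hi₁le
      linarith
    rw [habs] at h
    have hle : (i:ℝ) - (i₁:ℝ) ≤ (i₂:ℝ) - (i₁:ℝ) := by
      have : (i:ℝ) ≤ (i₂:ℝ) := by exact_mod_cast (by omega : i ≤ i₂)
      linarith
    calc d (q i) (q i₁) ≤ L * ((i:ℝ) - (i₁:ℝ)) + e := h
    _ ≤ L * ((i₂:ℝ) - (i₁:ℝ)) + e := by
        have := mul_le_mul_of_nonneg_left hle (le_of_lt hL0); linarith
    _ ≤ L * (L * (2*Ms + K + e)) + e := by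
        have := mul_le_mul_of_nonneg_left hlen (le_of_lt hL0); linarith
  -- final target index
  refine ⟨min (J i₁) n, mem_Iic.2 (min_le_right _ _), ?_⟩
  have hlast : d (γ (J i₁)) (γ (min (J i₁) n)) ≤ Ms := by
    have hgd : d (γ (J i₁)) (γ (min (J i₁) n)) = |(J i₁ : ℝ) - ((min (J i₁) n : ℕ) : ℝ)| :=
      hgeo _ (mem_univ _) _ (mem_univ _)
    rw [hgd]
    rcases le_total (J i₁) n with h | h
    · rw [min_eq_left h]; simp [hMs0]
    · rw [min_eq_right h]
      have hge : (0:ℝ) ≤ (J i₁ : ℝ) - (n : ℝ) := by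
        have : (n:ℝ) ≤ (J i₁ : ℝ) := by exact_mod_cast h
        linarith
      rw [abs_of_nonneg hge]
      have h2 := hJi₁hi
      rw [hT] at h2
      linarith
  calc d (q i) (γ (min (J i₁) n))
      ≤ d (q i) (q i₁) + d (q i₁) (γ (min (J i₁) n)) := hd.triangle _ _ _
    _ ≤ d (q i) (q i₁) + (d (q i₁) (γ (J i₁)) + d (γ (J i₁)) (γ (min (J i₁) n))) := by
        linarith [hd.triangle (q i₁) (γ (J i₁)) (γ (min (J i₁) n))]
    _ ≤ (L * (L * (2*Ms + K + e)) + e) + (Ms + Ms) := by linarith [hJ i₁ hm₁, hlast, hqi]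
    _ = M1 M L e := by
        simp only [M1, ← hMsdef]
        rw [hK]
        ring

end Restrict

section Limit
open Set Filter
variable {G : Type*} [Group G] {d : G → G → ℝ}

lemma reverse_limit (hd : DMet d) (hball : ∀ R : ℕ, {x : G | d 1 x ≤ (R : ℝ)}.Finite)
    {γ : ℕ → G} {M : MorseGauge} (hγ0 : γ 0 = 1)
    (hgeo : IsGeodesicOnN d γ univ) (hM : IsMorseOnN d M γ univ) :
    ∃ η : ℕ → G, η 0 = 1 ∧ IsGeodesicOnN d η univ ∧ IsMorseOnN d (M1 M) η univ ∧
      ∀ k : ℕ, {n : ℕ | k ≤ n ∧ ∀ i ≤ k, η i = rseg γ n i} ∈ Filter.hyperfilter ℕ := by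
  classical
  set U : Ultrafilter ℕ := Filter.hyperfilter ℕ with hU
  have hcof : ∀ s : Set ℕ, sᶜ.Finite → s ∈ U := by
    intro s hs
    exact Filter.hyperfilter_le_cofinite hs
  have hge : ∀ m : ℕ, {n : ℕ | m ≤ n} ∈ U := by
    intro m
    apply hcof
    apply Set.Finite.subset (Set.finite_Iio m)
    intro x hx
    simp only [Set.mem_compl_iff, Set.mem_setOf_eq, not_le] at hx
    simpa using hx
  have hrgeo : ∀ n, IsGeodesicOnN d (rseg γ n) (Iic n) := fun n => rseg_geodesic hd hgeo n
  have hrmorse : ∀ n, IsMorseOnN d (M1 M) (rseg γ n) (Iic n) := fun n =>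
    rseg_morse hd n (morse_restrict hd hgeo hM n)
  -- each coordinate lies in a finite ball eventually
  have hinball : ∀ i : ℕ, ∀ n, i ≤ n → d 1 (rseg γ n i) ≤ (i : ℝ) := by
    intro i n hin
    have := hrgeo n 0 (by simp) i (mem_Iic.2 hin)
    rw [rseg_zero] at this
    rw [this]
    simp
  -- define the limit via the ultrafilter
  have hkey : ∀ i : ℕ, ∃ x : G, {n : ℕ | rseg γ n i = x} ∈ U := by
    intro i
    have hmem : {x : G | d 1 x ≤ (i : ℝ)} ∈ U.map (fun n => rseg γ n i) := by
      rw [Ultrafilter.mem_map]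
      exact Filter.mem_of_superset (hge i) (fun n hn => hinball i n hn)
    obtain ⟨x, _, hx⟩ := Ultrafilter.eq_pure_of_finite_mem (hball i) hmem
    refine ⟨x, ?_⟩
    have : {x} ∈ U.map (fun n => rseg γ n i) := by rw [hx]; exact Filter.singleton_mem_pure
    rw [Ultrafilter.mem_map] at this
    exact Filter.mem_of_superset this (by intro n hn; simpa using hn)
  choose η hη using hkey
  -- stabilization
  have hstabU : ∀ k : ℕ, {n : ℕ | k ≤ n ∧ ∀ i ≤ k, η i = rseg γ n i} ∈ U := by
    intro k
    have h1 : (⋂ i ∈ Finset.range (k+1), {n : ℕ | rseg γ n i = η i}) ∈ U :=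
      (Filter.biInter_finset_mem _).2 (fun i _ => hη i)
    have h3 := Filter.inter_mem h1 (hge k)
    refine Filter.mem_of_superset h3 ?_
    rintro n ⟨hn1, hn2⟩
    refine ⟨hn2, fun i hik => ?_⟩
    exact (Set.mem_iInter₂.1 hn1 i (Finset.mem_range.2 (by omega))).symm
  have hstab : ∀ k N₀ : ℕ, ∃ n, N₀ ≤ n ∧ k ≤ n ∧ ∀ i ≤ k, η i = rseg γ n i := by
    intro k N₀
    obtain ⟨n, hn⟩ := Filter.nonempty_of_mem (Filter.inter_mem (hstabU k) (hge N₀))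
    exact ⟨n, hn.2, hn.1.1, hn.1.2⟩
  have hη0 : η 0 = 1 := by
    obtain ⟨n, _, _, hi⟩ := hstab 0 0
    rw [hi 0 le_rfl, rseg_zero]
  have hηgeo : IsGeodesicOnN d η univ := by
    intro i _ j _
    obtain ⟨n, _, hkn, hagree⟩ := hstab (max i j) 0
    rw [hagree i (le_max_left _ _), hagree j (le_max_right _ _)]
    exact hrgeo n i (mem_Iic.2 (le_trans (le_max_left _ _) hkn))
      j (mem_Iic.2 (le_trans (le_max_right _ _) hkn))
  have hηM : IsMorseOnN d (M1 M) η univ := by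
    intro L e hL he q a b hab hq ha hb i hi
    have hL0 : (0:ℝ) < L := lt_of_lt_of_le one_pos hL
    obtain ⟨j₁, _, hj₁⟩ := ha
    obtain ⟨j₂, _, hj₂⟩ := hb
    set Mx := M1 M L e with hMx
    set ρ : ℝ := (j₁ : ℝ) + (L * ((b:ℝ) - (a:ℝ)) + e) + Mx with hρ
    set k := max (max j₁ j₂) ⌈ρ⌉₊ with hk
    obtain ⟨n, _, hkn, hagree⟩ := hstab k k
    -- endpoints lie on the segment
    have hj₁k : j₁ ≤ k := le_trans (le_max_left _ _) (le_max_left _ _)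
    have hj₂k : j₂ ≤ k := le_trans (le_max_right _ _) (le_max_left _ _)
    have hea : q a ∈ rseg γ n '' Iic n :=
      ⟨j₁, mem_Iic.2 (le_trans hj₁k hkn), by rw [← hagree j₁ hj₁k]; exact hj₁⟩
    have heb : q b ∈ rseg γ n '' Iic n :=
      ⟨j₂, mem_Iic.2 (le_trans hj₂k hkn), by rw [← hagree j₂ hj₂k]; exact hj₂⟩
    obtain ⟨j, hjn, hjd⟩ := hrmorse n L e hL he q a b hab hq hea heb i hi
    simp only [mem_Iic] at hjn
    -- bound the shadow index
    have hd1qi : d 1 (q i) ≤ (j₁:ℝ) + (L * ((b:ℝ) - (a:ℝ)) + e) := by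
      have h1 : d 1 (q a) = (j₁ : ℝ) := by
        rw [← hj₁, ← hη0]
        have := hηgeo 0 (mem_univ _) j₁ (mem_univ _)
        rw [this]
        simp
      have h2 : d (q a) (q i) ≤ L * ((b:ℝ) - (a:ℝ)) + e := by
        have h := (hq a ⟨le_rfl, hab⟩ i hi).2
        have habs : |(a:ℝ) - (i:ℝ)| ≤ (b:ℝ) - (a:ℝ) := by
          rw [abs_sub_comm, abs_of_nonneg (by
            have : (a:ℝ) ≤ (i:ℝ) := by exact_mod_cast hi.1
            linarith)]
          have h1 : (i:ℝ) ≤ (b:ℝ) := by exact_mod_cast hi.2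
          have h2 : (0:ℝ) ≤ (a:ℝ) := by positivity
          linarith [(by exact_mod_cast hi.1 : (a:ℝ) ≤ (i:ℝ))]
        calc d (q a) (q i) ≤ L * |(a:ℝ) - (i:ℝ)| + e := h
        _ ≤ L * ((b:ℝ) - (a:ℝ)) + e := by
            have := mul_le_mul_of_nonneg_left habs (le_of_lt hL0); linarith
      calc d 1 (q i) ≤ d 1 (q a) + d (q a) (q i) := hd.triangle _ _ _
      _ ≤ (j₁:ℝ) + (L * ((b:ℝ) - (a:ℝ)) + e) := by rw [h1]; linarith
    have hjρ : (j : ℝ) ≤ ρ := by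
      have h1 : d 1 (rseg γ n j) = (j : ℝ) := by
        have := hrgeo n 0 (by simp) j (mem_Iic.2 hjn)
        rw [rseg_zero] at this
        rw [this]
        simp
      have h2 : d 1 (rseg γ n j) ≤ d 1 (q i) + d (q i) (rseg γ n j) := hd.triangle _ _ _
      rw [h1] at h2
      rw [hρ]
      linarith
    have hjk : j ≤ k := by
      have h1 : (j:ℝ) ≤ (⌈ρ⌉₊ : ℝ) := le_trans hjρ (Nat.le_ceil ρ)
      have h2 : j ≤ ⌈ρ⌉₊ := by exact_mod_cast h1
      exact le_trans h2 (le_max_right _ _)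
    refine ⟨j, mem_univ _, ?_⟩
    rw [hagree j hjk]
    exact hjd
  exact ⟨η, hη0, hηgeo, hηM, hstabU⟩

end Limit

section RestrictIci
open Set
variable {G : Type*} [Group G] {d : G → G → ℝ}

lemma morse_restrict_Ici (hd : DMet d) {γ : ℕ → G} {M : MorseGauge}
    (hgeo : IsGeodesicOnN d γ univ) (hM : IsMorseOnN d M γ univ) (n : ℕ) :
    IsMorseOnN d (M1 M) γ (Ici n) := by
  classical
  intro L e hL he q a b hab hq ha hb i hi
  have hL0 : (0:ℝ) < L := lt_of_lt_of_le one_pos hL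
  obtain ⟨s, hs, hsa⟩ := ha
  obtain ⟨t, ht, hta⟩ := hb
  simp only [mem_Ici] at hs ht
  set Ms := M L e with hMsdef
  have hMs0 : 0 ≤ Ms := mGauge_nonneg hd hM (mem_univ 0) hL he
  have hL2 : (1:ℝ) ≤ L^2 := by nlinarith
  have hbig : 2*Ms ≤ M1 M L e := by
    have hpos : (0:ℝ) ≤ 4*Ms + L + 2*e := by linarith
    have := mul_le_mul_of_nonneg_right hL2 hpos
    simp only [M1, ← hMsdef]
    nlinarith
  have hsh : ∀ i' ∈ Icc a b, ∃ j : ℕ, d (q i') (γ j) ≤ Ms := by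
    intro i' hi'
    obtain ⟨j, _, hj⟩ := hM L e hL he q a b hab hq ⟨s, mem_univ s, hsa⟩
      ⟨t, mem_univ t, hta⟩ i' hi'
    exact ⟨j, hj⟩
  choose! J hJ using hsh
  have hidx : ∀ (i' j : ℕ), i' ∈ Icc a b → |(J i' : ℝ) - (j : ℝ)| ≤ d (q i') (γ j) + Ms := by
    intro i' j hi'
    calc |(J i' : ℝ) - (j : ℝ)| = d (γ (J i')) (γ j) :=
          (hgeo _ (mem_univ _) _ (mem_univ _)).symm
    _ ≤ d (γ (J i')) (q i') + d (q i') (γ j) := hd.triangle _ _ _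
    _ = d (q i') (γ (J i')) + d (q i') (γ j) := by rw [hd.symm]
    _ ≤ Ms + d (q i') (γ j) := by linarith [hJ i' hi']
    _ = d (q i') (γ j) + Ms := by ring
  have hstep : ∀ i' : ℕ, a ≤ i' → i' + 1 ≤ b →
      |(J (i'+1) : ℝ) - (J i' : ℝ)| ≤ 2*Ms + (L + e) := by
    intro i' h1 h2
    have hm1 : i' ∈ Icc a b := ⟨h1, by omega⟩
    have hm2 : i' + 1 ∈ Icc a b := ⟨by omega, h2⟩
    have hqd : d (q i') (q (i'+1)) ≤ L + e := by
      have h := (hq i' hm1 (i'+1) hm2).2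
      have hc : ((i' : ℝ)) - ((i'+1 : ℕ) : ℝ) = -1 := by push_cast; ring
      rw [hc, abs_neg, abs_one, mul_one] at h
      exact h
    calc |(J (i'+1) : ℝ) - (J i' : ℝ)| = d (γ (J (i'+1))) (γ (J i')) :=
          (hgeo _ (mem_univ _) _ (mem_univ _)).symm
    _ ≤ d (γ (J (i'+1))) (q (i'+1)) + d (q (i'+1)) (γ (J i')) := hd.triangle _ _ _
    _ ≤ d (γ (J (i'+1))) (q (i'+1)) + (d (q (i'+1)) (q i') + d (q i') (γ (J i'))) := by
          linarith [hd.triangle (q (i'+1)) (q i') (γ (J i'))]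
    _ ≤ Ms + ((L + e) + Ms) := by
          have e1 := hJ (i'+1) hm2
          have e2 := hJ i' hm1
          rw [hd.symm (γ (J (i'+1))) (q (i'+1))]
          rw [hd.symm (q (i'+1)) (q i')]
          linarith
    _ = 2*Ms + (L + e) := by ring
  have hPa : (n : ℝ) - Ms ≤ (J a : ℝ) := by
    have h0 : d (q a) (γ s) = 0 := by rw [← hsa, hd.refl]
    have := hidx a s ⟨le_rfl, hab⟩
    rw [h0] at this
    have habs := abs_le.1 this
    have hsn : (n : ℝ) ≤ (s : ℝ) := by exact_mod_cast hs
    linarith [habs.1]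
  have hPb : (n : ℝ) - Ms ≤ (J b : ℝ) := by
    have h0 : d (q b) (γ t) = 0 := by rw [← hta, hd.refl]
    have := hidx b t ⟨hab, le_rfl⟩
    rw [h0] at this
    have habs := abs_le.1 this
    have htn : (n : ℝ) ≤ (t : ℝ) := by exact_mod_cast ht
    linarith [habs.1]
  by_cases h0 : n ≤ J i
  · exact ⟨J i, mem_Ici.2 h0, le_trans (hJ i hi) (by linarith)⟩
  by_cases h1 : (n : ℝ) - Ms ≤ (J i : ℝ)
  · refine ⟨n, mem_Ici.2 le_rfl, ?_⟩
    have hdist : d (γ (J i)) (γ n) = |(J i : ℝ) - (n : ℝ)| := hgeo _ (mem_univ _) _ (mem_univ _)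
    have hJn : |(J i : ℝ) - (n : ℝ)| ≤ Ms := by
      rw [abs_le]
      constructor
      · linarith
      · push_neg at h0
        have hn : (J i : ℝ) < (n : ℝ) := by exact_mod_cast h0
        linarith
    calc d (q i) (γ n) ≤ d (q i) (γ (J i)) + d (γ (J i)) (γ n) := hd.triangle _ _ _
    _ ≤ Ms + Ms := by rw [hdist]; linarith [hJ i hi]
    _ ≤ M1 M L e := by linarith
  push_neg at h1
  set T : ℝ := (n : ℝ) - Ms with hT
  set P : ℕ → Prop := fun m => a ≤ m ∧ T ≤ (J m : ℝ) with hP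
  have hPa' : P a := ⟨le_rfl, hPa⟩
  have hai : a ≤ i := hi.1
  have hib : i ≤ b := hi.2
  set i₁ := Nat.findGreatest P i with hi₁def
  have hi₁P : P i₁ := Nat.findGreatest_spec hai hPa'
  have hi₁le : i₁ ≤ i := Nat.findGreatest_le i
  have hi₁lt : i₁ < i := by
    rcases lt_or_eq_of_le hi₁le with h | h
    · exact h
    · exact absurd (h ▸ hi₁P).2 (not_le.2 h1)
  have hnot1 : ¬ P (i₁ + 1) := Nat.findGreatest_is_greatest (Nat.lt_succ_self i₁) (by omega)
  have hJ1 : (J (i₁ + 1) : ℝ) < T := by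
    by_contra hcon
    exact hnot1 ⟨by omega, not_lt.1 hcon⟩
  set Q : ℕ → Prop := fun u => T ≤ (J (i + u) : ℝ) ∧ i + u ≤ b with hQ
  have hQex : ∃ u, Q u := ⟨b - i, by constructor; · rw [Nat.add_sub_cancel' hib]; exact hPb
                                     · omega⟩
  set u₀ := Nat.find hQex with hu₀def
  have hQu : Q u₀ := Nat.find_spec hQex
  set i₂ := i + u₀ with hi₂def
  have hi₂b : i₂ ≤ b := hQu.2
  have hu₀pos : 0 < u₀ := by
    rcases Nat.eq_zero_or_pos u₀ with h | h
    · exfalso; have h2 := hQu.1; rw [h] at h2; simp at h2; exact absurd h2 (not_le.2 h1)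
    · exact h
  have hnot2 : ¬ Q (u₀ - 1) := Nat.find_min hQex (by omega)
  have hJ2' : (J (i + (u₀ - 1)) : ℝ) < T := by
    by_contra hcon
    exact hnot2 ⟨not_lt.1 hcon, by omega⟩
  set K : ℝ := 2*Ms + (L + e) with hK
  have hK0 : 0 ≤ K := by simp only [hK]; linarith
  have hstep1 : |(J (i₁+1) : ℝ) - (J i₁ : ℝ)| ≤ K := hstep i₁ hi₁P.1 (by omega)
  have hJi₁hi : (J i₁ : ℝ) < T + K := by
    have := (abs_le.1 hstep1).1
    linarith
  have hstep2 : |(J ((i + (u₀-1)) + 1) : ℝ) - (J (i + (u₀-1)) : ℝ)| ≤ K := by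
    refine hstep _ (by omega) (by omega)
  have hi₂eq : (i + (u₀ - 1)) + 1 = i₂ := by omega
  have hJi₂hi : (J i₂ : ℝ) < T + K := by
    rw [hi₂eq] at hstep2
    have := (abs_le.1 hstep2).2
    linarith
  have hJi₂lo : T ≤ (J i₂ : ℝ) := by have := hQu.1; rwa [← hi₂def] at this
  have hJi₁lo : T ≤ (J i₁ : ℝ) := hi₁P.2
  have hm₁ : i₁ ∈ Icc a b := ⟨hi₁P.1, le_trans hi₁le hib⟩
  have hm₂ : i₂ ∈ Icc a b := ⟨by omega, hi₂b⟩
  have hq12 : d (q i₁) (q i₂) ≤ 2*Ms + K := by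
    have hJd : |(J i₁ : ℝ) - (J i₂ : ℝ)| ≤ K := by
      rw [abs_le]; constructor <;> linarith
    have hgd : d (γ (J i₁)) (γ (J i₂)) = |(J i₁ : ℝ) - (J i₂ : ℝ)| :=
      hgeo _ (mem_univ _) _ (mem_univ _)
    calc d (q i₁) (q i₂) ≤ d (q i₁) (γ (J i₁)) + d (γ (J i₁)) (q i₂) := hd.triangle _ _ _
    _ ≤ d (q i₁) (γ (J i₁)) + (d (γ (J i₁)) (γ (J i₂)) + d (γ (J i₂)) (q i₂)) := by
        linarith [hd.triangle (γ (J i₁)) (γ (J i₂)) (q i₂)]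
    _ ≤ Ms + (K + Ms) := by
        rw [hgd, hd.symm (γ (J i₂)) (q i₂)]
        linarith [hJ i₁ hm₁, hJ i₂ hm₂, hJd]
    _ = 2*Ms + K := by ring
  have hlen : ((i₂ : ℝ) - (i₁ : ℝ)) ≤ L * (2*Ms + K + e) := by
    have hlow := (hq i₁ hm₁ i₂ hm₂).1
    have habs : |(i₁ : ℝ) - (i₂ : ℝ)| = (i₂ : ℝ) - (i₁ : ℝ) := by
      rw [abs_sub_comm, abs_of_nonneg]
      have : (i₁ : ℝ) ≤ (i₂ : ℝ) := by exact_mod_cast le_trans hi₁le (by omega)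
      linarith
    rw [habs] at hlow
    have h2 : (1/L) * ((i₂:ℝ) - (i₁:ℝ)) ≤ 2*Ms + K + e := by linarith
    calc ((i₂:ℝ) - (i₁:ℝ)) = L * ((1/L) * ((i₂:ℝ) - (i₁:ℝ))) := by field_simp
    _ ≤ L * (2*Ms + K + e) := by
        apply mul_le_mul_of_nonneg_left h2 (le_of_lt hL0)
  have hqi : d (q i) (q i₁) ≤ L * (L * (2*Ms + K + e)) + e := by
    have h := (hq i hi i₁ hm₁).2
    have habs : |(i:ℝ) - (i₁:ℝ)| = (i:ℝ) - (i₁:ℝ) := by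
      rw [abs_of_nonneg]
      have : (i₁ : ℝ) ≤ (i : ℝ) := by exact_mod_cast hi₁le
      linarith
    rw [habs] at h
    have hle : (i:ℝ) - (i₁:ℝ) ≤ (i₂:ℝ) - (i₁:ℝ) := by
      have : (i:ℝ) ≤ (i₂:ℝ) := by exact_mod_cast (by omega : i ≤ i₂)
      linarith
    calc d (q i) (q i₁) ≤ L * ((i:ℝ) - (i₁:ℝ)) + e := h
    _ ≤ L * ((i₂:ℝ) - (i₁:ℝ)) + e := by
        have := mul_le_mul_of_nonneg_left hle (le_of_lt hL0); linarith
    _ ≤ L * (L * (2*Ms + K + e)) + e := by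
        have := mul_le_mul_of_nonneg_left hlen (le_of_lt hL0); linarith
  refine ⟨max (J i₁) n, mem_Ici.2 (le_max_right _ _), ?_⟩
  have hlast : d (γ (J i₁)) (γ (max (J i₁) n)) ≤ Ms := by
    have hgd : d (γ (J i₁)) (γ (max (J i₁) n)) = |(J i₁ : ℝ) - ((max (J i₁) n : ℕ) : ℝ)| :=
      hgeo _ (mem_univ _) _ (mem_univ _)
    rw [hgd]
    rcases le_total n (J i₁) with h | h
    · rw [max_eq_left h]; simp [hMs0]
    · rw [max_eq_right h]
      have hge : (J i₁ : ℝ) - (n : ℝ) ≤ 0 := by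
        have : (J i₁ : ℝ) ≤ (n : ℝ) := by exact_mod_cast h
        linarith
      rw [abs_of_nonpos hge]
      rw [hT] at hJi₁lo
      linarith
  calc d (q i) (γ (max (J i₁) n))
      ≤ d (q i) (q i₁) + d (q i₁) (γ (max (J i₁) n)) := hd.triangle _ _ _
    _ ≤ d (q i) (q i₁) + (d (q i₁) (γ (J i₁)) + d (γ (J i₁)) (γ (max (J i₁) n))) := by
        linarith [hd.triangle (q i₁) (γ (J i₁)) (γ (max (J i₁) n))]
    _ ≤ (L * (L * (2*Ms + K + e)) + e) + (Ms + Ms) := by linarith [hJ i₁ hm₁, hlast, hqi]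
    _ = M1 M L e := by
        simp only [M1, ← hMsdef]
        rw [hK]
        ring

end RestrictIci

section Forward
open Set Filter
variable {G : Type*} [Group G] {d : G → G → ℝ}

/-- The translated forward tail `i ↦ (γ n)⁻¹ * γ (n + i)`. -/
def fseg (γ : ℕ → G) (n : ℕ) : ℕ → G := fun i => (γ n)⁻¹ * γ (n + i)

lemma fseg_zero (γ : ℕ → G) (n : ℕ) : fseg γ n 0 = 1 := by simp [fseg]

lemma fseg_geodesic (hd : DMet d) {γ : ℕ → G} (hgeo : IsGeodesicOnN d γ univ) (n : ℕ) :
    IsGeodesicOnN d (fseg γ n) univ := by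
  intro i _ j _
  rw [fseg, fseg, hd.left, hgeo _ (mem_univ _) _ (mem_univ _)]
  congr 1
  push_cast
  ring

lemma fseg_morse (hd : DMet d) {γ : ℕ → G} {M : MorseGauge} (n : ℕ)
    (hgeo : IsGeodesicOnN d γ univ) (hM : IsMorseOnN d M γ univ) :
    IsMorseOnN d (M1 M) (fseg γ n) univ := by
  have hMr := morse_restrict_Ici hd hgeo hM n
  intro L e hL he q a b hab hq ha hb i hi
  have htr : IsQGOnN d L e (fun i => γ n * q i) (Icc a b) := qg_translate hd _ hq
  have hmem : ∀ x : ℕ, x ∈ Icc a b → q x ∈ fseg γ n '' univ →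
      (γ n * q x) ∈ γ '' Ici n := by
    rintro x hx ⟨k, _, hkq⟩
    refine ⟨n + k, by simp [mem_Ici], ?_⟩
    rw [← hkq, fseg]
    simp
  obtain ⟨j, hj, hjd⟩ := hMr L e hL he (fun i => γ n * q i) a b hab htr
    (hmem a (by simp [hab]) ha) (hmem b (by simp [hab]) hb) i hi
  simp only [mem_Ici] at hj
  refine ⟨j - n, mem_univ _, ?_⟩
  have hgn : γ j = γ n * fseg γ n (j - n) := by
    rw [fseg]
    simp [Nat.add_sub_cancel' hj]
  calc d (q i) (fseg γ n (j - n)) = d (γ n * q i) (γ n * fseg γ n (j - n)) :=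
        (hd.left _ _ _).symm
  _ = d (γ n * q i) (γ j) := by rw [← hgn]
  _ ≤ M1 M L e := hjd

lemma forward_limit (hd : DMet d) (hball : ∀ R : ℕ, {x : G | d 1 x ≤ (R : ℝ)}.Finite)
    {γ : ℕ → G} {M : MorseGauge}
    (hgeo : IsGeodesicOnN d γ univ) (hM : IsMorseOnN d M γ univ) :
    ∃ τ : ℕ → G, τ 0 = 1 ∧ IsGeodesicOnN d τ univ ∧ IsMorseOnN d (M1 M) τ univ ∧
      ∀ k : ℕ, {n : ℕ | ∀ i ≤ k, τ i = fseg γ n i} ∈ Filter.hyperfilter ℕ := by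
  classical
  set U : Ultrafilter ℕ := Filter.hyperfilter ℕ with hU
  have hfgeo : ∀ n, IsGeodesicOnN d (fseg γ n) univ := fun n => fseg_geodesic hd hgeo n
  have hfmorse : ∀ n, IsMorseOnN d (M1 M) (fseg γ n) univ := fun n =>
    fseg_morse hd n hgeo hM
  have hinball : ∀ i n : ℕ, d 1 (fseg γ n i) ≤ (i : ℝ) := by
    intro i n
    have := hfgeo n 0 (mem_univ _) i (mem_univ _)
    rw [fseg_zero] at this
    rw [this]
    simp
  have hkey : ∀ i : ℕ, ∃ x : G, {n : ℕ | fseg γ n i = x} ∈ U := by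
    intro i
    have hmem : {x : G | d 1 x ≤ (i : ℝ)} ∈ U.map (fun n => fseg γ n i) := by
      rw [Ultrafilter.mem_map]
      exact Filter.univ_mem' (fun n => hinball i n)
    obtain ⟨x, _, hx⟩ := Ultrafilter.eq_pure_of_finite_mem (hball i) hmem
    refine ⟨x, ?_⟩
    have : {x} ∈ U.map (fun n => fseg γ n i) := by rw [hx]; exact Filter.singleton_mem_pure
    rw [Ultrafilter.mem_map] at this
    exact Filter.mem_of_superset this (by intro n hn; simpa using hn)
  choose τ hτ using hkey
  have hstabU : ∀ k : ℕ, {n : ℕ | ∀ i ≤ k, τ i = fseg γ n i} ∈ U := by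
    intro k
    have h1 : (⋂ i ∈ Finset.range (k+1), {n : ℕ | fseg γ n i = τ i}) ∈ U :=
      (Filter.biInter_finset_mem _).2 (fun i _ => hτ i)
    refine Filter.mem_of_superset h1 ?_
    intro n hn1 i hik
    exact (Set.mem_iInter₂.1 hn1 i (Finset.mem_range.2 (by omega))).symm
  have hstab : ∀ k : ℕ, ∃ n, ∀ i ≤ k, τ i = fseg γ n i :=
    fun k => Filter.nonempty_of_mem (hstabU k)
  have hτ0 : τ 0 = 1 := by
    obtain ⟨n, hi⟩ := hstab 0
    rw [hi 0 le_rfl, fseg_zero]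
  have hτgeo : IsGeodesicOnN d τ univ := by
    intro i _ j _
    obtain ⟨n, hagree⟩ := hstab (max i j)
    rw [hagree i (le_max_left _ _), hagree j (le_max_right _ _)]
    exact hfgeo n i (mem_univ _) j (mem_univ _)
  have hτM : IsMorseOnN d (M1 M) τ univ := by
    intro L e hL he q a b hab hq ha hb i hi
    have hL0 : (0:ℝ) < L := lt_of_lt_of_le one_pos hL
    obtain ⟨j₁, _, hj₁⟩ := ha
    obtain ⟨j₂, _, hj₂⟩ := hb
    set Mx := M1 M L e with hMx
    set ρ : ℝ := (j₁ : ℝ) + (L * ((b:ℝ) - (a:ℝ)) + e) + Mx with hρ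
    set k := max (max j₁ j₂) ⌈ρ⌉₊ with hk
    obtain ⟨n, hagree⟩ := hstab k
    have hj₁k : j₁ ≤ k := le_trans (le_max_left _ _) (le_max_left _ _)
    have hj₂k : j₂ ≤ k := le_trans (le_max_right _ _) (le_max_left _ _)
    have hea : q a ∈ fseg γ n '' univ :=
      ⟨j₁, mem_univ _, by rw [← hagree j₁ hj₁k]; exact hj₁⟩
    have heb : q b ∈ fseg γ n '' univ :=
      ⟨j₂, mem_univ _, by rw [← hagree j₂ hj₂k]; exact hj₂⟩
    obtain ⟨j, _, hjd⟩ := hfmorse n L e hL he q a b hab hq hea heb i hi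
    have hd1qi : d 1 (q i) ≤ (j₁:ℝ) + (L * ((b:ℝ) - (a:ℝ)) + e) := by
      have h1 : d 1 (q a) = (j₁ : ℝ) := by
        rw [← hj₁, ← hτ0]
        have := hτgeo 0 (mem_univ _) j₁ (mem_univ _)
        rw [this]
        simp
      have h2 : d (q a) (q i) ≤ L * ((b:ℝ) - (a:ℝ)) + e := by
        have h := (hq a ⟨le_rfl, hab⟩ i hi).2
        have habs : |(a:ℝ) - (i:ℝ)| ≤ (b:ℝ) - (a:ℝ) := by
          rw [abs_sub_comm, abs_of_nonneg (by
            have : (a:ℝ) ≤ (i:ℝ) := by exact_mod_cast hi.1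
            linarith)]
          have h1' : (i:ℝ) ≤ (b:ℝ) := by exact_mod_cast hi.2
          linarith [(by exact_mod_cast hi.1 : (a:ℝ) ≤ (i:ℝ))]
        calc d (q a) (q i) ≤ L * |(a:ℝ) - (i:ℝ)| + e := h
        _ ≤ L * ((b:ℝ) - (a:ℝ)) + e := by
            have := mul_le_mul_of_nonneg_left habs (le_of_lt hL0); linarith
      calc d 1 (q i) ≤ d 1 (q a) + d (q a) (q i) := hd.triangle _ _ _
      _ ≤ (j₁:ℝ) + (L * ((b:ℝ) - (a:ℝ)) + e) := by rw [h1]; linarith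
    have hjρ : (j : ℝ) ≤ ρ := by
      have h1 : d 1 (fseg γ n j) = (j : ℝ) := by
        have := hfgeo n 0 (mem_univ _) j (mem_univ _)
        rw [fseg_zero] at this
        rw [this]
        simp
      have h2 : d 1 (fseg γ n j) ≤ d 1 (q i) + d (q i) (fseg γ n j) := hd.triangle _ _ _
      rw [h1] at h2
      rw [hρ]
      linarith
    have hjk : j ≤ k := by
      have h1 : (j:ℝ) ≤ (⌈ρ⌉₊ : ℝ) := le_trans hjρ (Nat.le_ceil ρ)
      have h2 : j ≤ ⌈ρ⌉₊ := by exact_mod_cast h1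
      exact le_trans h2 (le_max_right _ _)
    refine ⟨j, mem_univ _, ?_⟩
    rw [hagree j hjk]
    exact hjd
  exact ⟨τ, hτ0, hτgeo, hτM, hstabU⟩

end Forward



/-- the Morse boundary of a finitely generated group is either empty or
has at least two points. -/
theorem stmt10 (G : Type*) [Group G] (S : Set G) (hfin : S.Finite)
    (hgen : Subgroup.closure S = ⊤) :
    IsEmpty (MorseBoundaryN (wordDist S) (1 : G)) ∨
      ∃ z w : MorseBoundaryN (wordDist S) (1 : G), z ≠ w := by
  by_cases hempty : IsEmpty (MorseBoundaryN (wordDist S) (1 : G))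
  · exact Or.inl hempty
  right
  by_contra hcon
  push_neg at hcon
  rw [not_isEmpty_iff] at hempty
  obtain ⟨z⟩ := hempty
  obtain ⟨γ₀, -⟩ := Quot.exists_rep z
  set d := wordDist S with hd'
  have hdmet : DMet d :=
    ⟨wd_nonneg hgen, wd_self hgen, wd_symm hgen, wd_triangle hgen,
      fun g x y => wd_left x y g⟩
  have hball : ∀ R : ℕ, {x : G | d 1 x ≤ (R:ℝ)}.Finite := by
    intro R
    have hsub : {x : G | d 1 x ≤ (R:ℝ)} ⊆ {x : G | wlen S x ≤ R} := by
      intro x hx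
      simp only [mem_setOf_eq] at hx ⊢
      rw [hd', wd_one hgen] at hx
      exact_mod_cast hx
    exact (finite_ball hfin hgen R).subset hsub
  -- by assumption, all Morse rays are at bounded distance from each other
  have hrel : ∀ α β : MRayN d 1, ∃ C, ∀ i, d (α.1 i) (β.1 i) ≤ C := by
    intro α β
    have h : (Quot.mk _ α : MorseBoundaryN d 1) = Quot.mk _ β := hcon _ _
    rw [Quot.eq] at h
    induction h with
    | rel x y h => exact h
    | refl x => exact ⟨0, fun i => le_of_eq (hdmet.refl _)⟩
    | symm x y _ ih =>
        obtain ⟨C, hC⟩ := ih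
        exact ⟨C, fun i => by rw [hdmet.symm]; exact hC i⟩
    | trans x y z _ _ ih1 ih2 =>
        obtain ⟨C1, h1⟩ := ih1
        obtain ⟨C2, h2⟩ := ih2
        exact ⟨C1 + C2, fun i => le_trans (hdmet.triangle _ _ _) (add_le_add (h1 i) (h2 i))⟩
  obtain ⟨hγ0, hγgeo, Mγ, hγM⟩ := γ₀.2
  obtain ⟨η, hη0, hηgeo, hηM, hηstab⟩ := reverse_limit hdmet hball hγ0 hγgeo hγM
  obtain ⟨τ, hτ0, hτgeo, hτM, hτstab⟩ := forward_limit hdmet hball hγgeo hγM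
  have ηray : MRayN d 1 := ⟨η, hη0, hηgeo, ⟨_, hηM⟩⟩
  have τray : MRayN d 1 := ⟨τ, hτ0, hτgeo, ⟨_, hτM⟩⟩
  obtain ⟨C₁, hC₁⟩ := hrel ⟨η, hη0, hηgeo, ⟨_, hηM⟩⟩ γ₀
  obtain ⟨C₂, hC₂⟩ := hrel γ₀ ⟨τ, hτ0, hτgeo, ⟨_, hτM⟩⟩
  obtain ⟨t, httt⟩ : ∃ t : ℕ, C₁ + C₂ < 2*(t:ℝ) := by
    refine ⟨⌈C₁ + C₂⌉₊ + 1, ?_⟩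
    have h1 := Nat.le_ceil (C₁ + C₂)
    have h2 : (0:ℝ) ≤ (⌈C₁ + C₂⌉₊ : ℝ) := by positivity
    push_cast
    linarith
  obtain ⟨n, hn⟩ := Filter.nonempty_of_mem (Filter.inter_mem (hηstab t) (hτstab t))
  obtain ⟨⟨htn, hηa⟩, hτa⟩ := hn
  have h2t : d (η t) (τ t) = 2*(t:ℝ) := by
    rw [hηa t le_rfl, hτa t le_rfl]
    show d ((γ₀.1 n)⁻¹ * γ₀.1 (n - t)) ((γ₀.1 n)⁻¹ * γ₀.1 (n + t)) = _
    rw [hdmet.left, hγgeo _ (mem_univ _) _ (mem_univ _), Nat.cast_sub htn, Nat.cast_add]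
    rw [show ((n:ℝ) - (t:ℝ)) - ((n:ℝ) + (t:ℝ)) = -(2*(t:ℝ)) by ring, abs_neg,
      abs_of_nonneg (by positivity)]
  have hle : d (η t) (τ t) ≤ C₁ + C₂ := by
    calc d (η t) (τ t) ≤ d (η t) (γ₀.1 t) + d (γ₀.1 t) (τ t) := hdmet.triangle _ _ _
    _ ≤ C₁ + C₂ := add_le_add (hC₁ t) (hC₂ t)
  rw [h2t] at hle
  linarith
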